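/- Let $p\in[1,d)$, $r>0$, $\tilde r=r/\sqrt{d+3}$, and let $T_\varepsilon u$ be the piecewise constant average of $u\in L^p(\mathbb{R}^d;\mathbb{R}^m)$ on the cubes $\tilde r\varepsilon k+[0,\tilde r\varepsilon)^d$, $k\in\mathbb{Z}^d$. Then there exists $C=C(p,d,r)>0$ such that for every $\varepsilon>0$: $\int_{B_r}\int_{\mathbb{R}^d}\left|\frac{T_\varepsilon u(x)-u(x)}{\varepsilon}\right|^p dx\,d\xi\le C\,G^{r,p}_\varepsilon(u,\mathbb{R}^d)$, where $G^{r,p}_\varepsilon(u,\mathbb{R}^d)=\int_{B_r}\int_{\mathbb{R}^d}\left|\frac{u(x+\varepsilon\xi)-u(x)}{\varepsilon}\right|^p dx\,d\xi$. -/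

import Mathlib

open MeasureTheory Metric ENNReal Set

/-- The nonlocal energy `G^{r,p}_ε(u, ℝ^d)`. -/
noncomputable def Gen {d m : ℕ} (r p ε : ℝ)
    (u : EuclideanSpace ℝ (Fin d) → EuclideanSpace ℝ (Fin m)) : ℝ≥0∞ :=
  ∫⁻ ξ in ball (0 : EuclideanSpace ℝ (Fin d)) r,
    ∫⁻ x, (‖(ε⁻¹ : ℝ) • (u (x + ε • ξ) - u x)‖₊ : ℝ≥0∞) ^ p

/-- Piecewise constant interpolation at scale `σ`. -/
noncomputable def Tpc {d m : ℕ} (σ : ℝ)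
    (u : EuclideanSpace ℝ (Fin d) → EuclideanSpace ℝ (Fin m))
    (x : EuclideanSpace ℝ (Fin d)) : EuclideanSpace ℝ (Fin m) :=
  ⨍ y in {y : EuclideanSpace ℝ (Fin d) |
      ∀ i, σ * (⌊x i / σ⌋ : ℝ) ≤ y i ∧ y i < σ * ((⌊x i / σ⌋ : ℝ) + 1)}, u y

/-! ### Auxiliary lemmas -/

lemma lintegral_rpow_le_measure_mul {α : Type*} [MeasurableSpace α] (μ : Measure α)
    {p : ℝ} (hp : 1 ≤ p) {f : α → ℝ≥0∞} (hf : AEMeasurable f μ) :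
    (∫⁻ a, f a ∂μ) ^ p ≤ μ univ ^ (p - 1) * ∫⁻ a, f a ^ p ∂μ := by
  rcases eq_or_lt_of_le hp with h1 | h1
  · simp [← h1]
  · have hpq := Real.HolderConjugate.conjExponent h1
    set q := Real.conjExponent p with hq
    have key := ENNReal.lintegral_mul_le_Lp_mul_Lq μ hpq hf
      (aemeasurable_const (b := (1 : ℝ≥0∞)))
    simp only [Pi.mul_apply, mul_one, ENNReal.one_rpow, lintegral_one] at key
    have hp0 : (0:ℝ) < p := lt_trans zero_lt_one h1
    have := ENNReal.rpow_le_rpow key hp0.le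
    calc (∫⁻ a, f a ∂μ) ^ p
        ≤ ((∫⁻ a, f a ^ p ∂μ) ^ (1/p) * (μ univ) ^ (1/q)) ^ p := this
      _ = (∫⁻ a, f a ^ p ∂μ) * (μ univ) ^ (p - 1) := by
          rw [ENNReal.mul_rpow_of_nonneg _ _ hp0.le, ← ENNReal.rpow_mul,
            ← ENNReal.rpow_mul, one_div_mul_cancel hp0.ne', ENNReal.rpow_one]
          congr 1
          rw [one_div, inv_mul_eq_div, hpq.div_conj_eq_sub_one]
      _ = μ univ ^ (p - 1) * ∫⁻ a, f a ^ p ∂μ := mul_comm _ _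

lemma jensen_avg {α : Type*} [MeasurableSpace α] (μ : Measure α) {F : Type*}
    [NormedAddCommGroup F] [NormedSpace ℝ F] (f : α → F) {p : ℝ} (hp : 1 ≤ p)
    (hf : AEMeasurable (fun a => (‖f a‖₊ : ℝ≥0∞)) μ)
    (hμ : μ univ ≠ 0) (hμ' : μ univ ≠ ∞) :
    (‖⨍ a, f a ∂μ‖₊ : ℝ≥0∞) ^ p ≤ (μ univ)⁻¹ * ∫⁻ a, (‖f a‖₊ : ℝ≥0∞) ^ p ∂μ := by
  have hp0 : (0:ℝ) < p := lt_of_lt_of_le zero_lt_one hp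
  have htR : (0:ℝ) < (μ univ).toReal := ENNReal.toReal_pos hμ hμ'
  have h1 : (‖⨍ a, f a ∂μ‖₊ : ℝ≥0∞) ≤ (μ univ)⁻¹ * ∫⁻ a, (‖f a‖₊ : ℝ≥0∞) ∂μ := by
    rw [average_eq]
    calc (‖(μ univ).toReal⁻¹ • ∫ a, f a ∂μ‖₊ : ℝ≥0∞)
        = ENNReal.ofReal ((μ univ).toReal⁻¹) * (‖∫ a, f a ∂μ‖₊ : ℝ≥0∞) := by
          rw [nnnorm_smul, ENNReal.coe_mul]
          congr 1
          rw [← ENNReal.ofReal_coe_nnreal]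
          congr 1
          simp [Real.nnnorm_of_nonneg (inv_nonneg.2 htR.le)]
      _ ≤ (μ univ)⁻¹ * ∫⁻ a, (‖f a‖₊ : ℝ≥0∞) ∂μ := by
          gcongr
          · rw [ENNReal.ofReal_inv_of_pos htR, ENNReal.ofReal_toReal hμ']
          · exact enorm_integral_le_lintegral_enorm f
  calc (‖⨍ a, f a ∂μ‖₊ : ℝ≥0∞) ^ p
      ≤ ((μ univ)⁻¹ * ∫⁻ a, (‖f a‖₊ : ℝ≥0∞) ∂μ) ^ p := ENNReal.rpow_le_rpow h1 hp0.le
    _ = ((μ univ)⁻¹) ^ p * (∫⁻ a, (‖f a‖₊ : ℝ≥0∞) ∂μ) ^ p :=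
        ENNReal.mul_rpow_of_nonneg _ _ hp0.le
    _ ≤ ((μ univ)⁻¹) ^ p * (μ univ ^ (p - 1) * ∫⁻ a, (‖f a‖₊ : ℝ≥0∞) ^ p ∂μ) := by
        gcongr
        exact lintegral_rpow_le_measure_mul μ hp hf
    _ = (μ univ)⁻¹ * ∫⁻ a, (‖f a‖₊ : ℝ≥0∞) ^ p ∂μ := by
        rw [← mul_assoc]
        congr 1
        rw [ENNReal.inv_rpow, ← ENNReal.rpow_neg, ← ENNReal.rpow_add _ _ hμ hμ',
          ← ENNReal.rpow_neg_one (μ univ)]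
        ring_nf

/-- The grid cube containing `x`. -/
def Qc {d : ℕ} (σ : ℝ) (x : EuclideanSpace ℝ (Fin d)) : Set (EuclideanSpace ℝ (Fin d)) :=
  {y | ∀ i, σ * (⌊x i / σ⌋ : ℝ) ≤ y i ∧ y i < σ * ((⌊x i / σ⌋ : ℝ) + 1)}

lemma Qc_eq {d : ℕ} (σ : ℝ) (x : EuclideanSpace ℝ (Fin d)) :
    Qc σ x = (MeasurableEquiv.toLp 2 (Fin d → ℝ)).symm ⁻¹'
      (univ.pi fun i => Ico (σ * (⌊x i / σ⌋ : ℝ)) (σ * (⌊x i / σ⌋ : ℝ) + σ)) := by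
  ext y
  simp only [Qc, mem_setOf_eq, mem_preimage, mem_pi, mem_univ, forall_true_left, mem_Ico]
  refine forall_congr' fun i => ?_
  have he : (MeasurableEquiv.toLp 2 (Fin d → ℝ)).symm y i = y i := rfl
  rw [he]
  constructor
  · rintro ⟨h1, h2⟩; exact ⟨h1, by linarith [h2, (by ring : σ * ((⌊x i / σ⌋ : ℝ) + 1) = σ * ⌊x i / σ⌋ + σ)]⟩
  · rintro ⟨h1, h2⟩; exact ⟨h1, by linarith [(by ring : σ * ((⌊x i / σ⌋ : ℝ) + 1) = σ * ⌊x i / σ⌋ + σ)]⟩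

lemma Qc_volume {d : ℕ} {σ : ℝ} (hσ : 0 ≤ σ) (x : EuclideanSpace ℝ (Fin d)) :
    volume (Qc σ x) = ENNReal.ofReal σ ^ d := by
  rw [Qc_eq]
  rw [(EuclideanSpace.volume_preserving_symm_measurableEquiv_toLp (Fin d)).measure_preimage
    (MeasurableSet.univ_pi fun i => measurableSet_Ico).nullMeasurableSet]
  rw [Real.volume_pi_Ico]
  simp

lemma Qc_subset_ball {d : ℕ} {σ : ℝ} (hσ : 0 < σ) (hd : d ≠ 0) (x : EuclideanSpace ℝ (Fin d)) :
    Qc σ x ⊆ ball x (σ * Real.sqrt d) := by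
  intro y hy
  rw [mem_ball, EuclideanSpace.dist_eq]
  have hlt : ∑ i, dist (y i) (x i) ^ 2 < d * σ ^ 2 := by
    have : ∀ i : Fin d, dist (y i) (x i) ^ 2 < σ ^ 2 := by
      intro i
      obtain ⟨h1, h2⟩ := hy i
      have hx1 : σ * (⌊x i / σ⌋ : ℝ) ≤ x i := by
        rw [mul_comm, ← le_div_iff₀ hσ]; exact Int.floor_le _
      have hx2 : x i < σ * ((⌊x i / σ⌋ : ℝ) + 1) := by
        rw [mul_comm, ← div_lt_iff₀ hσ]; exact Int.lt_floor_add_one _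
      have : |y i - x i| < σ := by
        rw [abs_lt]; constructor <;> nlinarith
      calc dist (y i) (x i) ^ 2 = |y i - x i| ^ 2 := by rw [Real.dist_eq]
        _ < σ ^ 2 := by nlinarith [abs_nonneg (y i - x i)]
    calc ∑ i, dist (y i) (x i) ^ 2 < ∑ _i : Fin d, σ ^ 2 := by
          apply Finset.sum_lt_sum_of_nonempty
          · exact Finset.univ_nonempty_iff.2 (Fin.pos_iff_nonempty.1 (Nat.pos_of_ne_zero hd))
          · intro i _; exact this i
      _ = d * σ ^ 2 := by simp [mul_comm]
  calc Real.sqrt (∑ i, dist (y i) (x i) ^ 2)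
      < Real.sqrt (d * σ ^ 2) := by
        apply Real.sqrt_lt_sqrt (Finset.sum_nonneg fun i _ => sq_nonneg _) hlt
    _ = σ * Real.sqrt d := by
        rw [Real.sqrt_mul (Nat.cast_nonneg d), Real.sqrt_sq hσ.le, mul_comm]

lemma inner_cov {d : ℕ} {ε r' : ℝ} (hε : 0 < ε)
    (G : EuclideanSpace ℝ (Fin d) → ℝ≥0∞) (hG : Measurable G)
    (x : EuclideanSpace ℝ (Fin d)) :
    ∫⁻ y in ball x (ε * r'), G y
      = ENNReal.ofReal (ε ^ d) * ∫⁻ ξ in ball 0 r', G (x + ε • ξ) := by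
  set R := ε * r' with hR
  have step1 : ∫⁻ y in ball x R, G y
      = ∫⁻ h in ball (0 : EuclideanSpace ℝ (Fin d)) R, G (x + h) := by
    have hpre : ((x + ·) : EuclideanSpace ℝ (Fin d) → EuclideanSpace ℝ (Fin d)) ⁻¹' ball x R
        = ball 0 R := by
      ext h
      simp [mem_ball, dist_eq_norm, add_sub_cancel_left]
    calc ∫⁻ y in ball x R, G y
        = ∫⁻ y in ball x R, G y ∂(Measure.map (x + ·) volume) := by
          rw [(measurePreserving_add_left volume x).map_eq]
      _ = ∫⁻ h in ((x + ·) : EuclideanSpace ℝ (Fin d) → EuclideanSpace ℝ (Fin d)) ⁻¹' ball x R,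
            G (x + h) := setLIntegral_map measurableSet_ball hG (measurable_const_add x)
      _ = _ := by rw [hpre]
  rw [step1]
  have hεd : (0:ℝ) < ε ^ d := pow_pos hε d
  have hfr : Module.finrank ℝ (EuclideanSpace ℝ (Fin d)) = d := finrank_euclideanSpace_fin
  have hmap := Measure.map_addHaar_smul (volume : Measure (EuclideanSpace ℝ (Fin d)))
    (ne_of_gt hε)
  rw [hfr] at hmap
  have hpre2 : ((ε • ·) : EuclideanSpace ℝ (Fin d) → EuclideanSpace ℝ (Fin d)) ⁻¹' ball 0 R
      = ball 0 r' := by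
    ext ξ
    simp only [mem_preimage, mem_ball_zero_iff, norm_smul, Real.norm_eq_abs,
      abs_of_pos hε, hR]
    exact mul_lt_mul_iff_right₀ hε
  have hH : Measurable fun h : EuclideanSpace ℝ (Fin d) => G (x + h) :=
    hG.comp (measurable_const_add x)
  have key : ENNReal.ofReal |(ε ^ d)⁻¹| * ∫⁻ h in ball (0 : EuclideanSpace ℝ (Fin d)) R, G (x + h)
      = ∫⁻ ξ in ball (0 : EuclideanSpace ℝ (Fin d)) r', G (x + ε • ξ) := by
    calc ENNReal.ofReal |(ε ^ d)⁻¹| * ∫⁻ h in ball (0 : EuclideanSpace ℝ (Fin d)) R, G (x + h)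
        = ∫⁻ h in ball (0 : EuclideanSpace ℝ (Fin d)) R, G (x + h)
            ∂(ENNReal.ofReal |(ε ^ d)⁻¹| • volume) := by
          rw [Measure.restrict_smul, lintegral_smul_measure, smul_eq_mul]
      _ = ∫⁻ h in ball (0 : EuclideanSpace ℝ (Fin d)) R, G (x + h)
            ∂(Measure.map (ε • ·) volume) := by rw [hmap]
      _ = ∫⁻ ξ in ((ε • ·) : EuclideanSpace ℝ (Fin d) → EuclideanSpace ℝ (Fin d)) ⁻¹' ball 0 R,
            G (x + ε • ξ) := setLIntegral_map measurableSet_ball hH (measurable_const_smul ε)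
      _ = ∫⁻ ξ in ball (0 : EuclideanSpace ℝ (Fin d)) r', G (x + ε • ξ) := by rw [hpre2]
  rw [← key, ← mul_assoc, ← ENNReal.ofReal_mul hεd.le, abs_of_pos (inv_pos.2 hεd),
    mul_inv_cancel₀ hεd.ne', ENNReal.ofReal_one, one_mul]

lemma stepA {d m : ℕ} {p σ ε : ℝ} (hp : 1 ≤ p) (hσ : 0 < σ)
    {v : EuclideanSpace ℝ (Fin d) → EuclideanSpace ℝ (Fin m)}
    (hv : StronglyMeasurable v) (hvℒ : MemLp v (ENNReal.ofReal p) volume)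
    (x : EuclideanSpace ℝ (Fin d)) :
    (‖(ε⁻¹ : ℝ) • (Tpc σ v x - v x)‖₊ : ℝ≥0∞) ^ p
      ≤ (ENNReal.ofReal σ ^ d)⁻¹
        * ∫⁻ y in Qc σ x, (‖(ε⁻¹ : ℝ) • (v y - v x)‖₊ : ℝ≥0∞) ^ p := by
  have hvol : volume (Qc σ x) = ENNReal.ofReal σ ^ d := Qc_volume hσ.le x
  have hV0 : (ENNReal.ofReal σ ^ d : ℝ≥0∞) ≠ 0 := by
    apply pow_ne_zero; simp [ENNReal.ofReal_eq_zero]; linarith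
  have hV1 : (ENNReal.ofReal σ ^ d : ℝ≥0∞) ≠ ∞ := by
    apply ENNReal.pow_ne_top; exact ENNReal.ofReal_ne_top
  set μQ := volume.restrict (Qc σ x) with hμQ
  have hμQuniv : μQ univ = ENNReal.ofReal σ ^ d := by
    rw [hμQ, Measure.restrict_apply_univ, hvol]
  haveI : IsFiniteMeasure μQ := ⟨by rw [hμQuniv]; exact hV1.lt_top⟩
  have hint : Integrable v μQ := by
    have h1 : MemLp v (ENNReal.ofReal p) μQ := hvℒ.restrict _
    have h2 : MemLp v 1 μQ := h1.mono_exponent (by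
      rw [← ENNReal.ofReal_one]; exact ENNReal.ofReal_le_ofReal hp)
    exact memLp_one_iff_integrable.mp h2
  have ht : ((μQ univ).toReal) ≠ 0 := by
    rw [hμQuniv]; exact (ENNReal.toReal_pos hV0 hV1).ne'
  have favg : (⨍ y, ((ε⁻¹ : ℝ) • (v y - v x)) ∂μQ) = (ε⁻¹ : ℝ) • (Tpc σ v x - v x) := by
    have hTpc : Tpc σ v x = (μQ univ).toReal⁻¹ • ∫ y, v y ∂μQ := by
      rw [show Tpc σ v x = ⨍ y, v y ∂μQ from rfl, average_eq, measureReal_def]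
    rw [average_eq, integral_smul, integral_sub hint (integrable_const _), integral_const,
      hTpc]
    rw [smul_comm, smul_sub, smul_sub, measureReal_def, smul_smul (((μQ univ).toReal)⁻¹) ((μQ univ).toReal),
      inv_mul_cancel₀ ht, one_smul, smul_sub, smul_smul]
  have hfmeas : AEMeasurable
      (fun y => (‖(ε⁻¹ : ℝ) • (v y - v x)‖₊ : ℝ≥0∞)) μQ := by
    exact (((hv.measurable.sub measurable_const).const_smul
      (ε⁻¹ : ℝ)).nnnorm.coe_nnreal_ennreal).aemeasurable
  have := jensen_avg μQ (fun y => (ε⁻¹ : ℝ) • (v y - v x)) hp hfmeas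
    (by rw [hμQuniv]; exact hV0) (by rw [hμQuniv]; exact hV1)
  rw [favg, hμQuniv] at this
  exact this

/-- Error estimate for piecewise-constant discretization in terms of `G^{r,p}_ε`. -/
theorem pc_interpolation_error (d m : ℕ) (p r : ℝ) (hp : 1 ≤ p) (hpd : p < d) (hr : 0 < r) :
    ∃ C : ℝ, 0 < C ∧
      ∀ (u : EuclideanSpace ℝ (Fin d) → EuclideanSpace ℝ (Fin m)) (ε : ℝ),
        MemLp u (ENNReal.ofReal p) volume → 0 < ε →
        (∫⁻ _ξ in ball (0 : EuclideanSpace ℝ (Fin d)) r,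
            ∫⁻ x, (‖(ε⁻¹ : ℝ) • (Tpc ((r / Real.sqrt (d + 3)) * ε) u x - u x)‖₊ : ℝ≥0∞) ^ p)
          ≤ ENNReal.ofReal C * Gen r p ε u := by
  have hd1 : (1:ℝ) < (d:ℝ) := lt_of_le_of_lt hp hpd
  have hd0 : d ≠ 0 := by
    rintro rfl; norm_num at hd1
  have hdR : (0:ℝ) < (d:ℝ) := lt_trans zero_lt_one hd1
  have hs3 : (0:ℝ) < Real.sqrt ((d:ℝ) + 3) := Real.sqrt_pos.2 (by positivity)
  set rt := r / Real.sqrt ((d:ℝ) + 3) with hrt_def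
  have hrt : 0 < rt := div_pos hr hs3
  set r' := rt * Real.sqrt d with hr'_def
  have hr'0 : 0 < r' := mul_pos hrt (Real.sqrt_pos.2 hdR)
  have hr'r : r' ≤ r := by
    have hsle : Real.sqrt (d:ℝ) ≤ Real.sqrt ((d:ℝ) + 3) := Real.sqrt_le_sqrt (by linarith)
    rw [hr'_def, hrt_def, div_mul_eq_mul_div, div_le_iff₀ hs3]
    nlinarith [hr.le]
  have hballpos : (0:ℝ≥0∞) < volume (ball (0 : EuclideanSpace ℝ (Fin d)) r) :=
    measure_ball_pos _ _ hr
  have hballfin : volume (ball (0 : EuclideanSpace ℝ (Fin d)) r) ≠ ∞ :=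
    measure_ball_lt_top.ne
  set B := volume (ball (0 : EuclideanSpace ℝ (Fin d)) r) with hB
  have hBt : 0 < B.toReal := ENNReal.toReal_pos hballpos.ne' hballfin
  refine ⟨B.toReal * (rt ^ d)⁻¹, mul_pos hBt (by positivity), ?_⟩
  intro u ε hu hε
  set σ := rt * ε with hσ_def
  have hσ : 0 < σ := mul_pos hrt hε
  -- measurable representative
  set v := hu.1.mk u with hv_def
  have hv : StronglyMeasurable v := hu.1.stronglyMeasurable_mk
  have huv : u =ᵐ[volume] v := hu.1.ae_eq_mk
  have hvℒ : MemLp v (ENNReal.ofReal p) volume := hu.ae_eq huv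
  have hvm : Measurable v := hv.measurable
  have hV0 : (ENNReal.ofReal σ ^ d : ℝ≥0∞) ≠ 0 := by
    apply pow_ne_zero; simp only [ne_eq, ENNReal.ofReal_eq_zero, not_le]; exact hσ
  have hV1 : (ENNReal.ofReal σ ^ d : ℝ≥0∞) ≠ ∞ :=
    ENNReal.pow_ne_top ENNReal.ofReal_ne_top
  -- abbreviations
  set F : EuclideanSpace ℝ (Fin d) → EuclideanSpace ℝ (Fin d) → ℝ≥0∞ :=
    fun x y => (‖(ε⁻¹ : ℝ) • (v y - v x)‖₊ : ℝ≥0∞) ^ p with hF_def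
  have hFm : ∀ x, Measurable (F x) := fun x =>
    ((((hvm.sub measurable_const).const_smul
      (ε⁻¹ : ℝ)).nnnorm.coe_nnreal_ennreal).pow measurable_const)
  -- step 0 : replace u by v in the LHS inner integral
  have hIuv : (∫⁻ x, (‖(ε⁻¹ : ℝ) • (Tpc σ u x - u x)‖₊ : ℝ≥0∞) ^ p)
      = ∫⁻ x, (‖(ε⁻¹ : ℝ) • (Tpc σ v x - v x)‖₊ : ℝ≥0∞) ^ p := by
    apply lintegral_congr_ae
    filter_upwards [huv] with x hx
    have hT : Tpc σ u x = Tpc σ v x := average_congr (ae_restrict_of_ae huv)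
    rw [hT, hx]
  -- Gen is invariant under a.e. modification
  have hGen : Gen r p ε u = Gen r p ε v := by
    refine lintegral_congr fun ξ => ?_
    apply lintegral_congr_ae
    have h1 : (fun x => u (x + ε • ξ)) =ᵐ[volume] fun x => v (x + ε • ξ) :=
      huv.comp_tendsto
        ((measurePreserving_add_right volume (ε • ξ)).quasiMeasurePreserving.tendsto_ae)
    filter_upwards [huv, h1] with x hx h1x
    rw [hx, h1x]
  -- measurability for Tonelli
  have hHm : Measurable (Function.uncurry fun (x ξ : EuclideanSpace ℝ (Fin d)) =>
      F x (x + ε • ξ)) := by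
    apply Measurable.pow _ measurable_const
    apply Measurable.coe_nnreal_ennreal
    apply Measurable.nnnorm
    refine Measurable.const_smul ?_ (ε⁻¹ : ℝ)
    exact (hvm.comp (measurable_fst.add (measurable_snd.const_smul ε))).sub
      (hvm.comp measurable_fst)
  -- the chain
  calc (∫⁻ _ξ in ball (0 : EuclideanSpace ℝ (Fin d)) r,
          ∫⁻ x, (‖(ε⁻¹ : ℝ) • (Tpc σ u x - u x)‖₊ : ℝ≥0∞) ^ p)
      = (∫⁻ x, (‖(ε⁻¹ : ℝ) • (Tpc σ v x - v x)‖₊ : ℝ≥0∞) ^ p) * B := by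
        rw [setLIntegral_const, hIuv]
    _ ≤ ((ENNReal.ofReal σ ^ d)⁻¹ * ∫⁻ x, ∫⁻ y in Qc σ x, F x y) * B := by
        apply mul_le_mul_left
        calc (∫⁻ x, (‖(ε⁻¹ : ℝ) • (Tpc σ v x - v x)‖₊ : ℝ≥0∞) ^ p)
            ≤ ∫⁻ x, (ENNReal.ofReal σ ^ d)⁻¹ * ∫⁻ y in Qc σ x, F x y :=
              lintegral_mono fun x => stepA hp hσ hv hvℒ x
          _ = _ := lintegral_const_mul' _ _ (by simpa using hV0)
    _ ≤ ((ENNReal.ofReal σ ^ d)⁻¹ * ∫⁻ x, ∫⁻ y in ball x (ε * r'), F x y) * B := by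
        apply mul_le_mul_left
        apply mul_le_mul_right
        refine lintegral_mono fun x => lintegral_mono_set ?_
        have : σ * Real.sqrt d = ε * r' := by rw [hσ_def, hr'_def]; ring
        rw [← this]
        exact Qc_subset_ball hσ hd0 x
    _ = ((ENNReal.ofReal σ ^ d)⁻¹ *
          (ENNReal.ofReal (ε ^ d) * ∫⁻ x, ∫⁻ ξ in ball 0 r', F x (x + ε • ξ))) * B := by
        congr 1
        congr 1
        rw [← lintegral_const_mul' _ _ (ENNReal.ofReal_ne_top)]
        exact lintegral_congr fun x => inner_cov hε (F x) (hFm x) x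
    _ = ((ENNReal.ofReal σ ^ d)⁻¹ *
          (ENNReal.ofReal (ε ^ d) * ∫⁻ ξ in ball 0 r', ∫⁻ x, F x (x + ε • ξ))) * B := by
        congr 2
        congr 1
        exact lintegral_lintegral_swap hHm.aemeasurable
    _ ≤ ((ENNReal.ofReal σ ^ d)⁻¹ *
          (ENNReal.ofReal (ε ^ d) * ∫⁻ ξ in ball 0 r, ∫⁻ x, F x (x + ε • ξ))) * B := by
        apply mul_le_mul_left
        apply mul_le_mul_right
        apply mul_le_mul_right
        exact lintegral_mono' (Measure.restrict_mono (ball_subset_ball hr'r) le_rfl) le_rfl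
    _ = ENNReal.ofReal (B.toReal * (rt ^ d)⁻¹) * Gen r p ε u := by
        rw [hGen]
        have hGv : Gen r p ε v = ∫⁻ ξ in ball 0 r, ∫⁻ x, F x (x + ε • ξ) := rfl
        rw [hGv]
        have he0 : (ENNReal.ofReal ε ^ d : ℝ≥0∞) ≠ 0 := by
          apply pow_ne_zero; simp only [ne_eq, ENNReal.ofReal_eq_zero, not_le]; exact hε
        have he1 : (ENNReal.ofReal ε ^ d : ℝ≥0∞) ≠ ∞ :=
          ENNReal.pow_ne_top ENNReal.ofReal_ne_top
        have hc1 : (ENNReal.ofReal σ ^ d)⁻¹ * ENNReal.ofReal (ε ^ d)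
            = (ENNReal.ofReal rt ^ d)⁻¹ := by
          rw [hσ_def, ENNReal.ofReal_mul hrt.le, mul_pow, ENNReal.ofReal_pow hε.le,
            ENNReal.mul_inv (Or.inl (pow_ne_zero _ (by
              simp only [ne_eq, ENNReal.ofReal_eq_zero, not_le]; exact hrt)))
              (Or.inl (ENNReal.pow_ne_top ENNReal.ofReal_ne_top)),
            mul_assoc, ENNReal.inv_mul_cancel he0 he1, mul_one]
        have hc2 : ENNReal.ofReal (B.toReal * (rt ^ d)⁻¹)
            = B * (ENNReal.ofReal rt ^ d)⁻¹ := by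
          rw [ENNReal.ofReal_mul ENNReal.toReal_nonneg, ENNReal.ofReal_toReal hballfin,
            ENNReal.ofReal_inv_of_pos (pow_pos hrt d), ENNReal.ofReal_pow hrt.le]
        rw [← mul_assoc, hc1, hc2]
        ring
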